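/- Let 0 < β_L ≤ β_R, f the cumulant generating function and I(j) = sup_{λ∈ℝ}(λ j − f(λ)) its Legendre transform. Then I satisfies the Gallavotti–Cohen symmetry relation: I(j) = (β_L − β_R) j + I(−j) for every j ∈ ℝ. -/

import Mathlib

open MeasureTheory Real Set

/-- `C(x,η) = ∫₀^∞ v e^{−η/v − x v²/2} dv`. -/
noncomputable def Ccal (x η : ℝ) : ℝ :=
  ∫ v in Set.Ioi (0 : ℝ), v * Real.exp (-η / v - x * v ^ 2 / 2)


lemma contOn_aux (x η : ℝ) :
    ContinuousOn (fun v => v * Real.exp (-η / v - x * v ^ 2 / 2)) (Set.Ioi (0:ℝ)) := by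
  apply ContinuousOn.mul continuousOn_id
  apply Real.continuous_exp.comp_continuousOn
  apply ContinuousOn.sub
  · exact continuousOn_const.div continuousOn_id (fun v hv => ne_of_gt hv)
  · fun_prop

lemma integrable_aux {x : ℝ} (hx : 0 < x) {η : ℝ} (hη : 0 ≤ η) :
    IntegrableOn (fun v => v * Real.exp (-η / v - x * v ^ 2 / 2)) (Set.Ioi (0:ℝ)) := by
  have hg : Integrable (fun v : ℝ => v * Real.exp (-(x/2) * v ^ 2)) :=
    integrable_mul_exp_neg_mul_sq (by linarith)
  apply Integrable.mono' hg.integrableOn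
  · exact (contOn_aux x η).aestronglyMeasurable measurableSet_Ioi
  · filter_upwards [ae_restrict_mem measurableSet_Ioi] with v hv
    have hv0 : (0:ℝ) < v := hv
    rw [Real.norm_eq_abs, abs_of_nonneg (by positivity)]
    apply mul_le_mul_of_nonneg_left _ hv0.le
    apply Real.exp_le_exp.2
    have : -η / v ≤ 0 := div_nonpos_of_nonpos_of_nonneg (by linarith) hv0.le
    nlinarith

lemma Ccal_pos {x : ℝ} (hx : 0 < x) {η : ℝ} (hη : 0 ≤ η) : 0 < Ccal x η := by
  rw [Ccal, setIntegral_pos_iff_support_of_nonneg_ae]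
  · have : Function.support (fun v => v * Real.exp (-η / v - x * v ^ 2 / 2)) ∩ Ioi 0 = Ioi 0 := by
      apply inter_eq_right.2
      intro v hv
      have hv0 : (0:ℝ) < v := hv
      simp only [Function.mem_support]
      positivity
    rw [this]
    simp [Real.volume_Ioi]
  · filter_upwards [ae_restrict_mem measurableSet_Ioi] with v hv
    have hv0 : (0:ℝ) < v := hv
    positivity
  · exact integrable_aux hx hη

lemma Ccal_strictAnti {x : ℝ} (hx : 0 < x) {η η' : ℝ} (hη : 0 ≤ η) (h : η < η') :
    Ccal x η' < Ccal x η := by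
  have hη' : 0 ≤ η' := by linarith
  have hsub : 0 < Ccal x η - Ccal x η' := by
    rw [Ccal, Ccal, ← integral_sub (integrable_aux hx hη) (integrable_aux hx hη')]
    rw [setIntegral_pos_iff_support_of_nonneg_ae]
    · have : Function.support (fun v => v * Real.exp (-η / v - x * v ^ 2 / 2)
          - v * Real.exp (-η' / v - x * v ^ 2 / 2)) ∩ Ioi 0 = Ioi 0 := by
        apply inter_eq_right.2
        intro v hv
        have hv0 : (0:ℝ) < v := hv
        simp only [Function.mem_support]
        have hlt : Real.exp (-η' / v - x * v ^ 2 / 2) < Real.exp (-η / v - x * v ^ 2 / 2) := by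
          apply Real.exp_lt_exp.2
          have : -η' / v < -η / v := (div_lt_div_iff_of_pos_right hv0).2 (by linarith)
          linarith
        nlinarith
      rw [this]
      simp [Real.volume_Ioi]
    · filter_upwards [ae_restrict_mem measurableSet_Ioi] with v hv
      have hv0 : (0:ℝ) < v := hv
      have hle : Real.exp (-η' / v - x * v ^ 2 / 2) ≤ Real.exp (-η / v - x * v ^ 2 / 2) := by
        apply Real.exp_le_exp.2
        have : -η' / v ≤ -η / v := (div_le_div_iff_of_pos_right hv0).2 (by linarith)
        linarith
      simp only [Pi.zero_apply]
      nlinarith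
    · exact (integrable_aux hx hη).sub (integrable_aux hx hη')
  linarith

/-- `F(λ,η) = β_L β_R C(β_R+λ, η) C(β_L−λ, η)`. -/
noncomputable def Fcal (βL βR lam η : ℝ) : ℝ :=
  βL * βR * Ccal (βR + lam) η * Ccal (βL - lam) η

lemma Fcal_strictAnti {βL βR lam : ℝ} (hβL : 0 < βL) (hβR : 0 < βR)
    (h1 : 0 < βR + lam) (h2 : 0 < βL - lam) {a b : ℝ} (ha : 0 ≤ a) (hab : a < b) :
    Fcal βL βR lam b < Fcal βL βR lam a := by
  have hb : (0:ℝ) ≤ b := by linarith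
  have c1 := Ccal_strictAnti h1 ha hab
  have c2 := Ccal_strictAnti h2 ha hab
  have p1 := Ccal_pos h1 hb
  have p2 := Ccal_pos h2 hb
  have hβ : 0 < βL * βR := mul_pos hβL hβR
  unfold Fcal
  have key : Ccal (βR + lam) b * Ccal (βL - lam) b < Ccal (βR + lam) a * Ccal (βL - lam) a :=
    mul_lt_mul c1 c2.le p2 (by linarith)
  calc βL * βR * Ccal (βR + lam) b * Ccal (βL - lam) b
      = βL * βR * (Ccal (βR + lam) b * Ccal (βL - lam) b) := by ring
    _ < βL * βR * (Ccal (βR + lam) a * Ccal (βL - lam) a) := by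
        exact mul_lt_mul_of_pos_left key hβ
    _ = βL * βR * Ccal (βR + lam) a * Ccal (βL - lam) a := by ring

lemma Fcal_unique {βL βR lam : ℝ} (hβL : 0 < βL) (hβR : 0 < βR)
    (h1 : 0 < βR + lam) (h2 : 0 < βL - lam) {η η' : ℝ} (hη : 0 < η) (hη' : 0 < η')
    (hF : Fcal βL βR lam η = 1) (hF' : Fcal βL βR lam η' = 1) : η = η' := by
  rcases lt_trichotomy η η' with h | h | h
  · have := Fcal_strictAnti hβL hβR h1 h2 hη.le h
    rw [hF, hF'] at this; linarith
  · exact h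
  · have := Fcal_strictAnti hβL hβR h1 h2 hη'.le h
    rw [hF, hF'] at this; linarith


/-- `f : ℝ → [0,∞]` is the cumulant generating function of the current:
`f(λ)` is the unique positive solution of `F(λ, f(λ)) = 1` on
`(−β_R, β_L) ∖ [β_L−β_R, 0]`, `f ≡ 0` on the interval between `β_L−β_R` and `0`,
and `f ≡ +∞` outside `(−β_R, β_L)`. -/
def IsCGF (βL βR : ℝ) (f : ℝ → EReal) : Prop :=
  (∀ lam ∈ Set.uIcc (βL - βR) 0, f lam = 0) ∧
  (∀ lam ∈ Set.Ioo (-βR) βL \ Set.uIcc (βL - βR) 0,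
      ∃ η : ℝ, 0 < η ∧ Fcal βL βR lam η = 1 ∧ f lam = (η : EReal)) ∧
  (∀ lam ∉ Set.Ioo (-βR) βL, f lam = ⊤)

/-- Legendre transform `I(j) = sup_λ (λ j − f(λ))`. -/
noncomputable def legendre (f : ℝ → EReal) (j : ℝ) : EReal :=
  ⨆ lam : ℝ, ((lam * j : ℝ) : EReal) - f lam


lemma f_symm (βL βR : ℝ) (hβL : 0 < βL) (hLR : βL ≤ βR)
    (f : ℝ → EReal) (hf : IsCGF βL βR f) (lam : ℝ) :
    f (βL - βR - lam) = f lam := by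
  have hβR : 0 < βR := lt_of_lt_of_le hβL hLR
  obtain ⟨h0, hpos, htop⟩ := hf
  have huIcc : Set.uIcc (βL - βR) 0 = Set.Icc (βL - βR) 0 :=
    Set.uIcc_of_le (by linarith)
  by_cases hmem : lam ∈ Set.Icc (βL - βR) 0
  · rw [h0 lam (by rw [huIcc]; exact hmem),
      h0 (βL - βR - lam) (by rw [huIcc]; constructor <;> [linarith [hmem.2]; linarith [hmem.1]])]
  · by_cases hio : lam ∈ Set.Ioo (-βR) βL
    · have hio' : (βL - βR - lam) ∈ Set.Ioo (-βR) βL := by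
        constructor <;> [linarith [hio.2]; linarith [hio.1]]
      have hmem' : (βL - βR - lam) ∉ Set.Icc (βL - βR) 0 := by
        intro hc
        exact hmem ⟨by linarith [hc.2], by linarith [hc.1]⟩
      obtain ⟨η, hη, hF, hfl⟩ := hpos lam ⟨hio, by rw [huIcc]; exact hmem⟩
      obtain ⟨η', hη', hF', hfl'⟩ := hpos (βL - βR - lam) ⟨hio', by rw [huIcc]; exact hmem'⟩
      have hF'' : Fcal βL βR lam η' = 1 := by
        rw [← hF']
        unfold Fcal
        have e1 : βR + (βL - βR - lam) = βL - lam := by ring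
        have e2 : βL - (βL - βR - lam) = βR + lam := by ring
        rw [e1, e2]; ring
      have h1 : 0 < βR + lam := by linarith [hio.1]
      have h2 : 0 < βL - lam := by linarith [hio.2]
      rw [hfl, hfl', Fcal_unique hβL hβR h1 h2 hη hη' hF hF'']
    · have hio' : (βL - βR - lam) ∉ Set.Ioo (-βR) βL := by
        intro hc
        exact hio ⟨by linarith [hc.2], by linarith [hc.1]⟩
      rw [htop lam hio, htop _ hio']

lemma ereal_sub_assoc (a b : ℝ) (x : EReal) :
    ((a + b : ℝ) : EReal) - x = (a : EReal) + ((b : ℝ) - x) := by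
  induction x using EReal.rec with
  | bot => simp [sub_eq_add_neg]
  | coe r =>
      rw [sub_eq_add_neg, sub_eq_add_neg, ← EReal.coe_neg, ← EReal.coe_add, ← EReal.coe_add,
        ← EReal.coe_add]
      norm_num [add_assoc]
  | top => simp [sub_eq_add_neg]

noncomputable def addOrderIso (c : ℝ) : EReal ≃o EReal where
  toFun x := (c : EReal) + x
  invFun x := ((-c : ℝ) : EReal) + x
  left_inv x := by
    induction x using EReal.rec with
    | bot => simp
    | coe r => simp only [← EReal.coe_add]; norm_num
    | top => simp
  right_inv x := by
    induction x using EReal.rec with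
    | bot => simp
    | coe r => simp only [← EReal.coe_add]; norm_num
    | top => simp
  map_rel_iff' := by
    intro x y
    constructor
    · exact fun h => (EReal.addLECancellable_coe c) h
    · exact fun h => show (c : EReal) + x ≤ (c : EReal) + y from add_le_add_right h _

lemma ereal_add_iSup (c : ℝ) (g : ℝ → EReal) :
    (c : EReal) + ⨆ x, g x = ⨆ x, ((c : EReal) + g x) :=
  (addOrderIso c).map_iSup g


/-- Gallavotti–Cohen symmetry for the Legendre transform of the cumulant generating
function: `I(j) = (β_L − β_R) j + I(−j)` for all `j ∈ ℝ`. -/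
theorem legendre_cgf_gallavotti_cohen
    (βL βR : ℝ) (hβL : 0 < βL) (hLR : βL ≤ βR)
    (f : ℝ → EReal) (hf : IsCGF βL βR f) :
    ∀ j : ℝ, legendre f j = (((βL - βR) * j : ℝ) : EReal) + legendre f (-j) := by
  intro j
  have hsurj : Function.Surjective (fun lam : ℝ => βL - βR - lam) :=
    fun y => ⟨βL - βR - y, by ring⟩
  calc legendre f j
      = ⨆ lam : ℝ, ((((βL - βR - lam) * j : ℝ)) : EReal) - f (βL - βR - lam) :=
        (hsurj.iSup_comp (fun t => (((t * j : ℝ)) : EReal) - f t)).symm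
    _ = ⨆ lam : ℝ, ((((βL - βR) * j : ℝ)) : EReal) + (((lam * (-j) : ℝ) : EReal) - f lam) := by
        apply iSup_congr
        intro lam
        rw [f_symm βL βR hβL hLR f hf lam]
        have : (βL - βR - lam) * j = (βL - βR) * j + lam * (-j) := by ring
        rw [this, ereal_sub_assoc]
    _ = (((βL - βR) * j : ℝ) : EReal) + legendre f (-j) := (ereal_add_iSup _ _).symm
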